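/- arXiv:1911.10667 — 2 statements merged into one kernel-verified Lean document; each statement's English description precedes it below -/
import Mathlib

section
/- For 0 < a < 2, let 𝒱_a(x) = |x|^{−a} on ℝ² \ {0} and b = 1 + a/2, and let ψ(x) = min(1, max(2 − |x|, 0)) be a continuous radial cutoff. Define W := 𝒱_b·ψ and V_reg(x) := ∫_{ℝ²} |x−y|^{−b} |y|^{−b} (1 − ψ(x−y)ψ(y)) dy. Then V_reg is finite for every x ∈ ℝ² and is continuous at the origin, i.e. V_reg(x) → V_reg(0) as x → 0. -/
open MeasureTheory Filter Topology Metric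

noncomputable section

abbrev E2 := EuclideanSpace ℝ (Fin 2)

open Set in
lemma ball_int {c : ℝ} (hc0 : 0 < c) (hc2 : c < 2) (R : ℝ) :
    IntegrableOn (fun y : E2 => ‖y‖ ^ (-c)) (closedBall 0 R) := by
  have hmeas : Measurable fun y : E2 => ‖y‖ ^ (-c) := by fun_prop
  have hnn : ∀ y : E2, 0 ≤ ‖y‖ ^ (-c) := fun y => Real.rpow_nonneg (norm_nonneg y) _
  refine ⟨hmeas.aestronglyMeasurable, ?_⟩
  rw [hasFiniteIntegral_iff_ofReal (ae_of_all _ hnn)]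
  rw [lintegral_eq_lintegral_meas_lt _ (ae_of_all _ hnn) hmeas.aemeasurable]
  rw [← Ioc_union_Ioi_eq_Ioi (zero_le_one (α := ℝ)),
    lintegral_union measurableSet_Ioi (Ioc_disjoint_Ioi le_rfl)]
  have hK : (volume : Measure E2) (closedBall 0 R) < ⊤ := measure_closedBall_lt_top
  have hsub : ∀ t : ℝ, 0 < t →
      (volume.restrict (closedBall (0:E2) R)) {y : E2 | t < ‖y‖ ^ (-c)}
        ≤ volume (ball (0:E2) (t ^ (-c⁻¹))) := by
    intro t ht
    refine le_trans (Measure.restrict_le_self _) (measure_mono ?_)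
    intro y hy
    simp only [mem_setOf_eq] at hy
    simp only [mem_ball, dist_zero_right]
    rcases eq_or_ne y 0 with rfl | hy0
    · simp only [norm_zero] at hy
      rw [Real.zero_rpow (neg_ne_zero.2 hc0.ne')] at hy
      exact absurd hy (not_lt.2 ht.le)
    · have hyn : 0 < ‖y‖ := norm_pos_iff.2 hy0
      have h2 := Real.rpow_lt_rpow_of_neg ht hy (neg_lt_zero.2 (inv_pos.2 hc0))
      calc ‖y‖ = (‖y‖ ^ (-c)) ^ (-c⁻¹) := by
            rw [← Real.rpow_mul (norm_nonneg y)]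
            rw [show (-c) * (-c⁻¹) = 1 by field_simp, Real.rpow_one]
        _ < t ^ (-c⁻¹) := h2
  have hfin1 : ∫⁻ t in Ioc (0:ℝ) 1, (volume.restrict (closedBall (0:E2) R))
      {y : E2 | t < ‖y‖ ^ (-c)} < ⊤ := by
    calc ∫⁻ t in Ioc (0:ℝ) 1, (volume.restrict (closedBall (0:E2) R)) {y : E2 | t < ‖y‖ ^ (-c)}
        ≤ ∫⁻ _ in Ioc (0:ℝ) 1, volume (closedBall (0:E2) R) :=
          lintegral_mono fun t =>
            (measure_mono (subset_univ _)).trans_eq (Measure.restrict_apply_univ _)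
      _ = volume (closedBall (0:E2) R) * volume (Ioc (0:ℝ) 1) := by
          rw [setLIntegral_const]
      _ < ⊤ := ENNReal.mul_lt_top hK (by simp)
  have hvol : ∀ t : ℝ, 1 < t → volume (ball (0:E2) (t ^ (-c⁻¹)))
      = ENNReal.ofReal (t ^ (-(2/c))) * volume (ball (0:E2) 1) := by
    intro t ht
    have ht0 : (0:ℝ) < t := lt_trans zero_lt_one ht
    rw [Measure.addHaar_ball volume 0 (Real.rpow_nonneg ht0.le _)]
    congr 1
    rw [show Module.finrank ℝ E2 = 2 from finrank_euclideanSpace_fin]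
    rw [← Real.rpow_natCast (t ^ (-c⁻¹)) 2, ← Real.rpow_mul ht0.le]
    norm_num
    ring_nf
  have hfin2 : ∫⁻ t in Ioi (1:ℝ), (volume.restrict (closedBall (0:E2) R))
      {y : E2 | t < ‖y‖ ^ (-c)} < ⊤ := by
    have hint : IntegrableOn (fun t : ℝ => t ^ (-(2/c))) (Ioi 1) := by
      apply integrableOn_Ioi_rpow_of_lt _ zero_lt_one
      rw [neg_lt_neg_iff]
      rw [lt_div_iff₀ hc0]
      linarith
    have hfi := hint.hasFiniteIntegral
    rw [hasFiniteIntegral_iff_ofReal] at hfi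
    · calc ∫⁻ t in Ioi (1:ℝ), (volume.restrict (closedBall (0:E2) R)) {y : E2 | t < ‖y‖ ^ (-c)}
          ≤ ∫⁻ t in Ioi (1:ℝ), ENNReal.ofReal (t ^ (-(2/c))) * volume (ball (0:E2) 1) := by
            apply lintegral_mono_ae
            filter_upwards [ae_restrict_mem measurableSet_Ioi] with t ht
            rw [← hvol t ht]
            exact hsub t (lt_trans zero_lt_one ht)
        _ = (∫⁻ t in Ioi (1:ℝ), ENNReal.ofReal (t ^ (-(2/c)))) * volume (ball (0:E2) 1) := by
            rw [lintegral_mul_const]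
            fun_prop
        _ < ⊤ := ENNReal.mul_lt_top hfi measure_ball_lt_top
    · filter_upwards [ae_restrict_mem measurableSet_Ioi] with t ht
      exact Real.rpow_nonneg (by linarith [mem_Ioi.1 ht]) _
  exact ENNReal.add_lt_top.2 ⟨hfin1, hfin2⟩

lemma rpow_prod_bound {u v K c : ℝ} (hu : 0 < u) (hv : 0 < v) (hK : 0 < K)
    (h1 : 1 + v ≤ K * u) (h2 : 1 + v ≤ K * v) (hc : 0 < c) :
    u ^ (-c) * v ^ (-c) ≤ K ^ (2*c) * (1 + v) ^ (-(2*c)) := by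
  have hw : (0:ℝ) < 1 + v := by linarith
  have hub : (1+v)^c ≤ K^c * u^c := by
    rw [← Real.mul_rpow hK.le hu.le]; exact Real.rpow_le_rpow hw.le h1 hc.le
  have hvb : (1+v)^c ≤ K^c * v^c := by
    rw [← Real.mul_rpow hK.le hv.le]; exact Real.rpow_le_rpow hw.le h2 hc.le
  have hup : 0 < u^c := Real.rpow_pos_of_pos hu c
  have hvp : 0 < v^c := Real.rpow_pos_of_pos hv c
  have hKp : 0 < K^c := Real.rpow_pos_of_pos hK c
  have hwp : 0 < (1+v)^c := Real.rpow_pos_of_pos hw c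
  rw [Real.rpow_neg hu.le, Real.rpow_neg hv.le, Real.rpow_neg hw.le,
    show (2*c) = c + c by ring, Real.rpow_add hw, Real.rpow_add hK, ← mul_inv,
    ← div_eq_mul_inv, ← one_div, div_le_div_iff₀ (by positivity) (by positivity)]
  nlinarith [mul_le_mul hub hvb hwp.le (by positivity : (0:ℝ) ≤ K^c * u^c)]

theorem stmt6 (a : ℝ) (ha : 0 < a) (ha2 : a < 2) (b : ℝ) (hb : b = 1 + a / 2)
    (ψ : E2 → ℝ) (hψ : ∀ x, ψ x = min 1 (max (2 - ‖x‖) 0))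
    (Vreg : E2 → ℝ)
    (hVreg : ∀ x, Vreg x =
      ∫ y, ‖x - y‖ ^ (-b) * ‖y‖ ^ (-b) * (1 - ψ (x - y) * ψ y)) :
    (∀ x : E2, Integrable
      (fun y => ‖x - y‖ ^ (-b) * ‖y‖ ^ (-b) * (1 - ψ (x - y) * ψ y))) ∧
    ContinuousAt Vreg 0 := by
  have hb0 : 0 < b := by rw [hb]; linarith
  have hb2 : b < 2 := by rw [hb]; linarith
  have h2b : 2 < 2 * b := by rw [hb]; linarith
  have hψc : Continuous ψ := by
    have hfe : ψ = fun x => min 1 (max (2 - ‖x‖) 0) := funext hψ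
    rw [hfe]
    exact continuous_const.min ((continuous_const.sub continuous_norm).max continuous_const)
  have hψ0 : ∀ z, 0 ≤ ψ z := fun z => by
    rw [hψ z]; exact le_min zero_le_one (le_max_right _ _)
  have hψle : ∀ z, ψ z ≤ 1 := fun z => by rw [hψ z]; exact min_le_left _ _
  have hψ1 : ∀ z : E2, ‖z‖ ≤ 1 → ψ z = 1 := fun z hz => by
    rw [hψ z]; exact min_eq_left (le_max_of_le_left (by linarith))
  have hfmeas : ∀ x : E2, Measurable
      (fun y : E2 => ‖x - y‖ ^ (-b) * ‖y‖ ^ (-b) * (1 - ψ (x - y) * ψ y)) := by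
    intro x
    have h1 : Measurable fun y : E2 => x - y := measurable_const.sub measurable_id
    exact (by fun_prop : Measurable fun y : E2 => ‖x - y‖ ^ (-b) * ‖y‖ ^ (-b)).mul
      (measurable_const.sub ((hψc.measurable.comp h1).mul hψc.measurable))
  have hFnn : ∀ x y : E2, 0 ≤ ‖x - y‖ ^ (-b) * ‖y‖ ^ (-b) * (1 - ψ (x - y) * ψ y) := by
    intro x y
    have := hψle (x - y); have := hψle y; have := hψ0 (x - y); have := hψ0 y
    have h1 : 0 ≤ 1 - ψ (x - y) * ψ y := by nlinarith
    positivity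
  have hFle : ∀ x y : E2, ‖x - y‖ ^ (-b) * ‖y‖ ^ (-b) * (1 - ψ (x - y) * ψ y)
      ≤ ‖x - y‖ ^ (-b) * ‖y‖ ^ (-b) := by
    intro x y
    have := hψ0 (x - y); have := hψ0 y
    refine mul_le_of_le_one_right (by positivity) ?_
    nlinarith
  have hFzero : ∀ x y : E2, ‖x - y‖ ≤ 1 → ‖y‖ ≤ 1 →
      ‖x - y‖ ^ (-b) * ‖y‖ ^ (-b) * (1 - ψ (x - y) * ψ y) = 0 := by
    intro x y h1 h2
    rw [hψ1 _ h1, hψ1 _ h2]; ring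
  have hfar : Integrable (fun y : E2 => (1 + ‖y‖) ^ (-(2*b))) := by
    apply integrable_one_add_norm (E := E2)
    simpa using h2b
  have key : ∀ x : E2, Integrable
      (fun y : E2 => ‖x - y‖ ^ (-b) * ‖y‖ ^ (-b) * (1 - ψ (x - y) * ψ y)) := by
    intro x
    set K : ℝ := 3 + 2 * ‖x‖ with hKdef
    have hKpos : 0 < K := by positivity
    have base : IntegrableOn (fun y : E2 => ‖y‖ ^ (-b)) (closedBall 0 1) :=
      ball_int hb0 hb2 1
    have ind1 : Integrable ((closedBall (0:E2) 1).indicator fun y => ‖y‖ ^ (-b)) :=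
      base.integrable_indicator measurableSet_closedBall
    have ind2' : Integrable
        (fun y : E2 => ((closedBall (0:E2) 1).indicator fun z => ‖z‖ ^ (-b)) (x - y)) :=
      ind1.comp_sub_left x
    have ind2eq : (fun y : E2 => ((closedBall (0:E2) 1).indicator fun z => ‖z‖ ^ (-b)) (x - y))
        = (closedBall x 1).indicator (fun y : E2 => ‖x - y‖ ^ (-b)) := by
      funext y
      have hmem : (x - y ∈ closedBall (0:E2) 1) ↔ (y ∈ closedBall x 1) := by
        simp [mem_closedBall, dist_eq_norm, norm_sub_rev x y]
      by_cases h : y ∈ closedBall x 1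
      · rw [Set.indicator_of_mem (hmem.2 h), Set.indicator_of_mem h]
      · rw [Set.indicator_of_notMem (fun hc => h (hmem.1 hc)), Set.indicator_of_notMem h]
    have ind2 : Integrable ((closedBall x 1).indicator (fun y : E2 => ‖x - y‖ ^ (-b))) :=
      ind2eq ▸ ind2'
    have ind3 : Integrable (fun y : E2 => K ^ (2*b) * (1 + ‖y‖) ^ (-(2*b))) :=
      hfar.const_mul _
    apply Integrable.mono' ((ind1.add ind2).add ind3) (hfmeas x).aestronglyMeasurable
    refine ae_of_all _ fun y => ?_
    rw [Real.norm_eq_abs, abs_of_nonneg (hFnn x y)]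
    have hind1nn : 0 ≤ (closedBall (0:E2) 1).indicator (fun y : E2 => ‖y‖ ^ (-b)) y :=
      Set.indicator_nonneg (fun z _ => Real.rpow_nonneg (norm_nonneg z) _) y
    have hind2nn : 0 ≤ (closedBall x 1).indicator (fun y : E2 => ‖x - y‖ ^ (-b)) y :=
      Set.indicator_nonneg (fun z _ => Real.rpow_nonneg (norm_nonneg _) _) y
    have hind3nn : 0 ≤ K ^ (2*b) * (1 + ‖y‖) ^ (-(2*b)) := by positivity
    rcases le_or_gt ‖y‖ 1 with hv | hv <;> rcases le_or_gt ‖x - y‖ 1 with hu | hu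
    · rw [hFzero x y hu hv]
      simp only [Pi.add_apply]
      linarith
    · -- ‖y‖ ≤ 1, ‖x - y‖ > 1 : bounded by first indicator
      have h1 : ‖x - y‖ ^ (-b) ≤ 1 :=
        Real.rpow_le_one_of_one_le_of_nonpos hu.le (by linarith)
      have h2 : ‖x - y‖ ^ (-b) * ‖y‖ ^ (-b) * (1 - ψ (x - y) * ψ y) ≤ ‖y‖ ^ (-b) := by
        refine (hFle x y).trans ?_
        calc ‖x - y‖ ^ (-b) * ‖y‖ ^ (-b) ≤ 1 * ‖y‖ ^ (-b) :=
              mul_le_mul_of_nonneg_right h1 (Real.rpow_nonneg (norm_nonneg _) _)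
          _ = ‖y‖ ^ (-b) := one_mul _
      have h3 : (closedBall (0:E2) 1).indicator (fun y : E2 => ‖y‖ ^ (-b)) y = ‖y‖ ^ (-b) :=
        Set.indicator_of_mem (by simpa [mem_closedBall, dist_zero_right] using hv) _
      simp only [Pi.add_apply]
      linarith
    · -- ‖y‖ > 1, ‖x - y‖ ≤ 1 : bounded by second indicator
      have h1 : ‖y‖ ^ (-b) ≤ 1 :=
        Real.rpow_le_one_of_one_le_of_nonpos hv.le (by linarith)
      have h2 : ‖x - y‖ ^ (-b) * ‖y‖ ^ (-b) * (1 - ψ (x - y) * ψ y) ≤ ‖x - y‖ ^ (-b) := by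
        refine (hFle x y).trans ?_
        calc ‖x - y‖ ^ (-b) * ‖y‖ ^ (-b) ≤ ‖x - y‖ ^ (-b) * 1 :=
              mul_le_mul_of_nonneg_left h1 (Real.rpow_nonneg (norm_nonneg _) _)
          _ = ‖x - y‖ ^ (-b) := mul_one _
      have h3 : (closedBall x 1).indicator (fun y : E2 => ‖x - y‖ ^ (-b)) y
          = ‖x - y‖ ^ (-b) :=
        Set.indicator_of_mem
          (by simpa [mem_closedBall, dist_eq_norm, norm_sub_rev x y] using hu) _
      simp only [Pi.add_apply]
      linarith
    · -- both > 1 : bounded by far-field term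
      have hupos : (0:ℝ) < ‖x - y‖ := by linarith
      have hvpos : (0:ℝ) < ‖y‖ := by linarith
      have hyx : ‖y‖ ≤ ‖x‖ + ‖x - y‖ := by
        calc ‖y‖ = ‖x - (x - y)‖ := by rw [sub_sub_cancel]
          _ ≤ ‖x‖ + ‖x - y‖ := norm_sub_le _ _
      have h1 : 1 + ‖y‖ ≤ K * ‖x - y‖ := by
        have hx0 : (0:ℝ) ≤ ‖x‖ := norm_nonneg x
        nlinarith
      have h2 : 1 + ‖y‖ ≤ K * ‖y‖ := by
        have hx0 : (0:ℝ) ≤ ‖x‖ := norm_nonneg x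
        nlinarith
      have h3 := rpow_prod_bound hupos hvpos hKpos h1 h2 hb0
      have h4 := (hFle x y).trans h3
      simp only [Pi.add_apply]
      linarith
  refine ⟨key, ?_⟩
  have hVeq : Vreg = fun x => ∫ y, ‖x - y‖ ^ (-b) * ‖y‖ ^ (-b) * (1 - ψ (x - y) * ψ y) :=
    funext hVreg
  rw [hVeq]
  apply continuousAt_of_dominated
    (bound := fun y : E2 => (7/2 : ℝ) ^ (2*b) * (1 + ‖y‖) ^ (-(2*b)))
  · exact Eventually.of_forall fun x => (hfmeas x).aestronglyMeasurable
  · filter_upwards [Metric.ball_mem_nhds (0:E2) (by norm_num : (0:ℝ) < 1/4)] with x hx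
    refine ae_of_all _ fun y => ?_
    have hxn : ‖x‖ < 1/4 := by simpa [mem_ball, dist_zero_right] using hx
    rw [Real.norm_eq_abs, abs_of_nonneg (hFnn x y)]
    rcases le_or_gt ‖y‖ (3/4) with hv | hv
    · have h1 : ‖x - y‖ ≤ 1 := (norm_sub_le x y).trans (by linarith)
      rw [hFzero x y h1 (by linarith)]
      positivity
    · have hvpos : (0:ℝ) < ‖y‖ := by linarith
      have hlow : ‖y‖ - ‖x‖ ≤ ‖x - y‖ := by
        calc ‖y‖ - ‖x‖ ≤ ‖y - x‖ := norm_sub_norm_le y x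
          _ = ‖x - y‖ := norm_sub_rev y x
      have hupos : (0:ℝ) < ‖x - y‖ := by linarith
      have h1 : 1 + ‖y‖ ≤ (7/2) * ‖x - y‖ := by nlinarith
      have h2 : 1 + ‖y‖ ≤ (7/2) * ‖y‖ := by linarith
      exact (hFle x y).trans
        (rpow_prod_bound hupos hvpos (by norm_num) h1 h2 hb0)
  · exact hfar.const_mul _
  · have h0 : ∀ᵐ y : E2, y ≠ 0 := by
      refine ae_iff.mpr ?_
      simpa using measure_singleton (0 : E2)
    filter_upwards [h0] with y hy
    have hval : ‖(0:E2) - y‖ ≠ 0 := by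
      simpa [norm_ne_zero_iff] using hy
    have hc1 : ContinuousAt (fun x : E2 => ‖x - y‖ ^ (-b)) 0 :=
      ((continuous_id.sub continuous_const).norm.continuousAt).rpow_const (Or.inl hval)
    have hc2 : ContinuousAt (fun x : E2 => 1 - ψ (x - y) * ψ y) 0 :=
      (continuous_const.sub
        ((hψc.comp (continuous_id.sub continuous_const)).mul continuous_const)).continuousAt
    exact (hc1.mul continuousAt_const).mul hc2
end
end

section
/- Let U : ℝ² → [0,∞] be radially symmetric, radially non-increasing, locally integrable, and continuous away from 0. Let Λ = rℤ² be a square lattice in ℝ² with spacing r > 0, let x ∈ ℝ², and let 0 < ε < 1. Then there exists a constant C > 0 depending only on the lattice structure (not on r, x, ε, or U) such that r² Σ_{y ∈ Λ ∩ B(x,ε), y ≠ x, |x−y| ≥ r} U(x − y) ≤ C ∫_{B(0, ε + r)} U(z) dz. -/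
open MeasureTheory Filter Topology Metric
open scoped ENNReal

noncomputable section

/-- The point `r • m` of the square lattice `r ℤ²` in `ℝ²`. -/
def latticePt (r : ℝ) (m : Fin 2 → ℤ) : E2 :=
  r • (WithLp.equiv 2 (Fin 2 → ℝ)).symm (fun i => (m i : ℝ))

lemma abs_coord_le_norm (w : E2) (i : Fin 2) : |w i| ≤ ‖w‖ := by
  rw [EuclideanSpace.norm_eq]
  have h1 : |w i| = Real.sqrt (‖w i‖ ^ 2) := by
    rw [Real.sqrt_sq_eq_abs, Real.norm_eq_abs, abs_abs]
  rw [h1]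
  apply Real.sqrt_le_sqrt
  exact Finset.single_le_sum (f := fun j => ‖w j‖ ^ 2)
    (fun j _ => by positivity) (Finset.mem_univ i)

lemma latticePt_apply (r : ℝ) (m : Fin 2 → ℤ) (i : Fin 2) :
    latticePt r m i = r * m i := rfl

theorem stmt12 :
    ∃ C : ℝ, 0 < C ∧
      ∀ (r : ℝ), 0 < r → ∀ (x : E2) (ε : ℝ), 0 < ε → ε < 1 →
      ∀ (U : E2 → ℝ) (f : ℝ → ℝ),
        (∀ z, U z = f ‖z‖) → AntitoneOn f (Set.Ici 0) → (∀ z, 0 ≤ U z) →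
        LocallyIntegrable U volume → ContinuousOn U {(0 : E2)}ᶜ →
        r ^ 2 * (∑' m : {m : Fin 2 → ℤ // latticePt r m ∈ ball x ε ∧
            latticePt r m ≠ x ∧ r ≤ dist x (latticePt r m)},
            U (x - latticePt r m.1))
          ≤ C * ∫ z in ball (0 : E2) (ε + r), U z := by
  classical
  set v := volume (ball (0 : E2) 1) with hvdef
  have hv0 : v ≠ 0 := (measure_ball_pos _ _ one_pos).ne'
  have hvtop : v ≠ ⊤ := measure_ball_lt_top.ne
  have hvr : 0 < v.toReal := ENNReal.toReal_pos hv0 hvtop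
  refine ⟨64 / v.toReal, by positivity, ?_⟩
  intro r hr x ε hε hε1 U f hUf hf hU0 hUloc _hUc
  set ι := {m : Fin 2 → ℤ // latticePt r m ∈ ball x ε ∧
      latticePt r m ≠ x ∧ r ≤ dist x (latticePt r m)} with hιdef
  have hInt : IntegrableOn U (ball (0 : E2) (ε + r)) volume :=
    (hUloc.integrableOn_isCompact (isCompact_closedBall 0 (ε + r))).mono_set
      ball_subset_closedBall
  set I := ∫ z in ball (0 : E2) (ε + r), U z with hIdef
  have hI0 : 0 ≤ I := setIntegral_nonneg measurableSet_ball (fun z _ => hU0 z)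
  set g : E2 → ℝ≥0∞ := fun z => ENNReal.ofReal (U z) with hgdef
  have hgm : AEMeasurable g volume :=
    (hUloc.aestronglyMeasurable.aemeasurable).ennreal_ofReal
  set L := ∫⁻ z in ball (0 : E2) (ε + r), g z with hLdef
  have hL : ENNReal.ofReal I = L :=
    ofReal_integral_eq_lintegral_ofReal hInt (Eventually.of_forall fun z => hU0 z)
  -- notation for lattice points
  set y : ι → E2 := fun m => latticePt r m.1 with hydef
  set d : ι → ℝ := fun m => ‖x - y m‖ with hddef
  have hrd : ∀ m : ι, r ≤ d m := by
    intro m; have := m.2.2.2; rwa [dist_eq_norm] at this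
  have hdε : ∀ m : ι, d m < ε := by
    intro m
    have := m.2.1
    rw [mem_ball, dist_eq_norm] at this
    calc d m = ‖y m - x‖ := norm_sub_rev x (y m)
    _ < ε := this
  have hd0 : ∀ m : ι, 0 < d m := fun m => lt_of_lt_of_le hr (hrd m)
  set c : ι → E2 := fun m => (1 - r / (2 * d m)) • (x - y m) with hcdef
  have hct : ∀ m : ι, 0 ≤ 1 - r / (2 * d m) := by
    intro m
    have h1 : r / (2 * d m) ≤ 1 / 2 := by
      rw [div_le_div_iff₀ (mul_pos two_pos (hd0 m)) (by norm_num : (0:ℝ) < 2)]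
      nlinarith [hrd m, hd0 m]
    linarith
  have hcnorm : ∀ m : ι, ‖c m‖ = d m - r / 2 := by
    intro m
    rw [hcdef]
    simp only [norm_smul, Real.norm_eq_abs, abs_of_nonneg (hct m)]
    have h1 : ‖x - y m‖ = d m := rfl
    have hdne : d m ≠ 0 := ne_of_gt (hd0 m)
    rw [h1]
    field_simp
  set B : ι → Set E2 := fun m => ball (c m) (r / 4) with hBdef
  have hznorm : ∀ m : ι, ∀ z ∈ B m, ‖z‖ ≤ d m - r / 4 := by
    intro m z hz
    rw [hBdef, mem_ball, dist_eq_norm] at hz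
    calc ‖z‖ = ‖(z - c m) + c m‖ := by congr 1; abel
    _ ≤ ‖z - c m‖ + ‖c m‖ := norm_add_le _ _
    _ ≤ r / 4 + (d m - r / 2) := by
        have := hcnorm m; linarith [le_of_lt hz]
    _ = d m - r / 4 := by ring
  have hsub : ∀ m : ι, B m ⊆ ball (0 : E2) (ε + r) := by
    intro m z hz
    rw [mem_ball, dist_zero_right]
    have := hznorm m z hz
    have := hdε m
    linarith
  have hUz : ∀ m : ι, ∀ z ∈ B m, ENNReal.ofReal (U (x - y m)) ≤ g z := by
    intro m z hz
    apply ENNReal.ofReal_le_ofReal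
    rw [hUf, hUf]
    have h1 : ‖z‖ ≤ d m := le_trans (hznorm m z hz) (by linarith)
    exact hf (Set.mem_Ici.mpr (norm_nonneg z)) (Set.mem_Ici.mpr (norm_nonneg _)) h1
  -- Step A
  have stepA : ∀ m : ι,
      ENNReal.ofReal (r ^ 2 * U (x - y m)) * v ≤ 16 * ∫⁻ z in B m, g z := by
    intro m
    have hvol : volume (B m) = ENNReal.ofReal ((r / 4) ^ 2) * v := by
      rw [hBdef]
      rw [Measure.addHaar_ball volume (c m) (by positivity : (0:ℝ) ≤ r / 4)]
      rw [finrank_euclideanSpace_fin]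
    have h1 : ENNReal.ofReal (U (x - y m)) * volume (B m) ≤ ∫⁻ z in B m, g z := by
      rw [← lintegral_indicator measurableSet_ball]
      calc ENNReal.ofReal (U (x - y m)) * volume (B m)
          = ∫⁻ z, (B m).indicator (fun _ => ENNReal.ofReal (U (x - y m))) z := by
            rw [lintegral_indicator measurableSet_ball, setLIntegral_const]
      _ ≤ ∫⁻ z, (B m).indicator g z := by
            apply lintegral_mono
            intro z
            by_cases hz : z ∈ B m
            · simp only [Set.indicator_of_mem hz]; exact hUz m z hz
            · simp [Set.indicator_of_notMem hz]
    calc ENNReal.ofReal (r ^ 2 * U (x - y m)) * v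
        = 16 * (ENNReal.ofReal (U (x - y m)) * (ENNReal.ofReal ((r / 4) ^ 2) * v)) := by
          rw [ENNReal.ofReal_mul (by positivity : (0:ℝ) ≤ r ^ 2)]
          have h16 : (16 : ℝ≥0∞) * ENNReal.ofReal ((r / 4) ^ 2) = ENNReal.ofReal (r ^ 2) := by
            rw [show (16 : ℝ≥0∞) = ENNReal.ofReal 16 by simp,
              ← ENNReal.ofReal_mul (by norm_num : (0:ℝ) ≤ 16)]
            congr 1; ring
          calc ENNReal.ofReal (r ^ 2) * ENNReal.ofReal (U (x - y m)) * v
              = (16 * ENNReal.ofReal ((r / 4) ^ 2)) * ENNReal.ofReal (U (x - y m)) * v := by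
                rw [h16]
          _ = 16 * (ENNReal.ofReal (U (x - y m)) * (ENNReal.ofReal ((r / 4) ^ 2) * v)) := by
                ring
    _ = 16 * (ENNReal.ofReal (U (x - y m)) * volume (B m)) := by rw [hvol]
    _ ≤ 16 * ∫⁻ z in B m, g z := by
          exact mul_le_mul_right h1 16
  -- Step B : bounded overlap
  have stepB : ∀ F : Finset ι, ∑ m ∈ F, ∫⁻ z in B m, g z ≤ 4 * L := by
    intro F
    have h1 : ∑ m ∈ F, ∫⁻ z in B m, g z = ∫⁻ z, ∑ m ∈ F, (B m).indicator g z := by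
      rw [lintegral_finset_sum' F (fun m _ => hgm.indicator measurableSet_ball)]
      exact Finset.sum_congr rfl fun m _ => (lintegral_indicator measurableSet_ball g).symm
    rw [h1]
    have h2 : ∀ z, ∑ m ∈ F, (B m).indicator g z
        ≤ 4 * (ball (0 : E2) (ε + r)).indicator g z := by
      intro z
      set F' := F.filter (fun m => z ∈ B m) with hF'def
      have hsum : ∑ m ∈ F, (B m).indicator g z = (F'.card : ℝ≥0∞) * g z := by
        rw [hF'def]
        rw [show ∑ m ∈ F, (B m).indicator g z
            = ∑ m ∈ F, (if z ∈ B m then g z else 0) from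
          Finset.sum_congr rfl fun m _ => by rw [Set.indicator_apply]]
        rw [← Finset.sum_filter, Finset.sum_const, nsmul_eq_mul]
      rw [hsum]
      rcases F'.eq_empty_or_nonempty with hF' | hF'
      · simp [hF']
      · obtain ⟨m₀, hm₀⟩ := hF'
        have hzm₀ : z ∈ B m₀ := (Finset.mem_filter.mp hm₀).2
        have hzball : z ∈ ball (0 : E2) (ε + r) := hsub m₀ hzm₀
        rw [Set.indicator_of_mem hzball]
        -- card bound
        have hcard : F'.card ≤ 4 := by
          set a : Fin 2 → ℤ := fun i => ⌈(x i - z i) / r - 3 / 4⌉ with hadef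
          set S : Finset (Fin 2 → ℤ) :=
            Fintype.piFinset (fun i => ({a i, a i + 1} : Finset ℤ)) with hSdef
          have hmem : ∀ m ∈ F', m.1 ∈ S := by
            intro m hm
            have hzm : z ∈ B m := (Finset.mem_filter.mp hm).2
            have hdist : ‖(x - y m) - z‖ < 3 * r / 4 := by
              rw [hBdef, mem_ball, dist_eq_norm] at hzm
              have hc2 : ‖(x - y m) - c m‖ = r / 2 := by
                have : (x - y m) - c m = (r / (2 * d m)) • (x - y m) := by
                  have hc : c m = (1 - r / (2 * d m)) • (x - y m) := rfl
                  rw [hc, sub_smul, one_smul]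
                  abel
                rw [this, norm_smul, Real.norm_eq_abs,
                  abs_of_nonneg (by positivity : (0:ℝ) ≤ r / (2 * d m))]
                have : ‖x - y m‖ = d m := rfl
                have hdne : d m ≠ 0 := ne_of_gt (hd0 m)
                rw [this]
                field_simp
              calc ‖(x - y m) - z‖ = ‖((x - y m) - c m) - (z - c m)‖ := by abel_nf
              _ ≤ ‖(x - y m) - c m‖ + ‖z - c m‖ := norm_sub_le _ _
              _ < r / 2 + r / 4 := by rw [hc2]; linarith [hzm]
              _ = 3 * r / 4 := by ring
            rw [hSdef, Fintype.mem_piFinset]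
            intro i
            have hcoord : |x i - r * m.1 i - z i| < 3 * r / 4 := by
              have := abs_coord_le_norm ((x - y m) - z) i
              have happ : ((x - y m) - z) i = x i - r * m.1 i - z i := by
                simp [hydef, latticePt_apply]
              rw [happ] at this
              linarith [hdist]
            have habs := abs_lt.mp hcoord
            have hlow : (x i - z i) / r - 3 / 4 < (m.1 i : ℝ) := by
              rw [sub_lt_iff_lt_add, div_lt_iff₀ hr]
              nlinarith [habs.2]
            have hhigh' : ((m.1 i : ℝ) - 3 / 4) < (x i - z i) / r := by
              rw [lt_div_iff₀ hr]
              nlinarith [habs.1]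
            have h1 : a i ≤ m.1 i := by
              simp only [hadef]
              exact Int.ceil_le.mpr (le_of_lt hlow)
            have h2 : m.1 i ≤ a i + 1 := by
              have hceil : (x i - z i) / r - 3 / 4 ≤ ((a i : ℤ) : ℝ) := by
                simp only [hadef]
                exact Int.le_ceil _
              have h4 : ((m.1 i : ℤ) : ℝ) < ((a i + 2 : ℤ) : ℝ) := by
                push_cast
                linarith
              have h5 : m.1 i < a i + 2 := by exact_mod_cast h4
              omega
            simp only [Finset.mem_insert, Finset.mem_singleton]
            omega
          have hinj : Set.InjOn (fun m : ι => m.1) F' := fun p _ q _ h => Subtype.ext h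
          calc F'.card = (F'.image (fun m : ι => m.1)).card :=
                (Finset.card_image_of_injOn hinj).symm
          _ ≤ S.card := Finset.card_le_card (by
                intro p hp
                obtain ⟨m, hm, rfl⟩ := Finset.mem_image.mp hp
                exact hmem m hm)
          _ ≤ 4 := by
                rw [hSdef, Fintype.card_piFinset]
                have : ∀ i : Fin 2, ({a i, a i + 1} : Finset ℤ).card ≤ 2 := by
                  intro i
                  apply le_trans (Finset.card_insert_le _ _)
                  simp
                calc ∏ i : Fin 2, ({a i, a i + 1} : Finset ℤ).card
                    ≤ ∏ _i : Fin 2, 2 := Finset.prod_le_prod (fun _ _ => Nat.zero_le _)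
                      (fun i _ => this i)
                _ = 4 := by simp [Fin.prod_univ_two]
        have hcast : (F'.card : ℝ≥0∞) ≤ 4 := by exact_mod_cast hcard
        exact mul_le_mul_left hcast (g z)
    refine le_trans (lintegral_mono h2) ?_
    rw [lintegral_const_mul' 4 _ (by norm_num : (4 : ℝ≥0∞) ≠ ⊤),
      lintegral_indicator measurableSet_ball]
  -- finite sum bound
  have hfin : ∀ F : Finset ι,
      ∑ m ∈ F, r ^ 2 * U (x - y m) ≤ 64 / v.toReal * I := by
    intro F
    have key : ENNReal.ofReal (∑ m ∈ F, r ^ 2 * U (x - y m)) * v ≤ 64 * ENNReal.ofReal I := by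
      rw [ENNReal.ofReal_sum_of_nonneg (fun m _ => by
        have := hU0 (x - y m); positivity)]
      calc (∑ m ∈ F, ENNReal.ofReal (r ^ 2 * U (x - y m))) * v
          = ∑ m ∈ F, ENNReal.ofReal (r ^ 2 * U (x - y m)) * v := Finset.sum_mul _ _ _
      _ ≤ ∑ m ∈ F, 16 * ∫⁻ z in B m, g z := Finset.sum_le_sum fun m _ => stepA m
      _ = 16 * ∑ m ∈ F, ∫⁻ z in B m, g z := (Finset.mul_sum _ _ _).symm
      _ ≤ 16 * (4 * L) := mul_le_mul_right (stepB F) 16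
      _ = 64 * L := by ring
      _ = 64 * ENNReal.ofReal I := by rw [hL]
    have key2 : ENNReal.ofReal (∑ m ∈ F, r ^ 2 * U (x - y m))
        ≤ 64 * ENNReal.ofReal I / v :=
      (ENNReal.le_div_iff_mul_le (Or.inl hv0) (Or.inl hvtop)).mpr key
    have hRtop : 64 * ENNReal.ofReal I / v ≠ ⊤ :=
      (ENNReal.div_lt_top (ENNReal.mul_ne_top (by norm_num) ENNReal.ofReal_ne_top) hv0).ne
    have h3 := ENNReal.toReal_mono hRtop key2
    rw [ENNReal.toReal_ofReal (Finset.sum_nonneg fun m _ => by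
      have := hU0 (x - y m); positivity)] at h3
    have h4 : (64 * ENNReal.ofReal I / v).toReal = 64 / v.toReal * I := by
      rw [ENNReal.toReal_div, ENNReal.toReal_mul, ENNReal.toReal_ofReal hI0]
      rw [show ((64 : ℝ≥0∞)).toReal = (64 : ℝ) by simp]
      ring
    rw [h4] at h3
    exact h3
  -- conclude
  by_cases hs : Summable (fun m : ι => U (x - latticePt r m.1))
  · rw [← tsum_mul_left]
    exact Summable.tsum_le_of_sum_le (hs.mul_left _) hfin
  · rw [tsum_eq_zero_of_not_summable hs, mul_zero]
    have : 0 ≤ 64 / v.toReal * I := by positivity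
    exact this
end
end
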